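/- Let a > 0, σ > 0, 1 ≤ s < d, and let ξ be standard Gaussian. For the selector η̄_j = 1{log(cosh(aX_j/σ²)) ≥ t} with t = a²/(2σ²) + log(d/s - 1), applied to the Gaussian sequence model X_j = θ_j + σξ_j, one has for every θ ∈ Θ_d(s,a): (1/s)·E_θ Σ_j |η̄_j - η_j| ≤ (d/s - 1)·P(e^{-a²/(2σ²)}·cosh(aξ/σ) ≥ d/s - 1) + P(e^{-a²/(2σ²)}·cosh(aξ/σ + a²/σ²) < d/s - 1). -/

import Mathlib

open MeasureTheory ProbabilityTheory

section AuxGaussian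
open Real Set

noncomputable def stdPdf : ℝ → ℝ := gaussianPDFReal 0 1

lemma stdPdf_continuous : Continuous stdPdf := by
  unfold stdPdf gaussianPDFReal
  fun_prop

lemma stdPdf_nonneg (x : ℝ) : 0 ≤ stdPdf x := gaussianPDFReal_nonneg 0 1 x

lemma stdPdf_anti {x y : ℝ} (h : y ^ 2 ≤ x ^ 2) : stdPdf x ≤ stdPdf y := by
  unfold stdPdf gaussianPDFReal
  push_cast
  apply mul_le_mul_of_nonneg_left _ (by positivity)
  rw [Real.exp_le_exp]
  simp only [sub_zero]
  nlinarith

lemma stdPdf_intervalIntegrable (l u : ℝ) :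
    IntervalIntegrable stdPdf volume l u :=
  (integrable_gaussianPDFReal 0 1).intervalIntegrable

noncomputable def stdCDF (u : ℝ) : ℝ := ∫ x in (0:ℝ)..u, stdPdf x

lemma stdCDF_hasDerivAt (u : ℝ) : HasDerivAt stdCDF (stdPdf u) u :=
  (stdPdf_continuous.integral_hasStrictDerivAt 0 u).hasDerivAt

lemma gaussian_Ioo_toReal {l u : ℝ} (h : l ≤ u) :
    (gaussianReal 0 1 (Set.Ioo l u)).toReal = stdCDF u - stdCDF l := by
  rw [gaussianReal_apply_eq_integral 0 one_ne_zero, ENNReal.toReal_ofReal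
      (setIntegral_nonneg measurableSet_Ioo fun x _ => gaussianPDFReal_nonneg 0 1 x)]
  have : ∫ x in Set.Ioo l u, gaussianPDFReal 0 1 x = ∫ x in l..u, stdPdf x := by
    rw [intervalIntegral.integral_of_le h, integral_Ioc_eq_integral_Ioo]
    rfl
  rw [this, ← intervalIntegral.integral_interval_sub_left (stdPdf_intervalIntegrable 0 u)
      (stdPdf_intervalIntegrable 0 l)]
  rfl

lemma stdCDF_diff_antitone (c r : ℝ) (hc : 0 ≤ c) (hr : 0 < r) :
    AntitoneOn (fun u => stdCDF ((c - u)/r) - stdCDF ((-c - u)/r)) (Ici 0) := by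
  have hderiv : ∀ u : ℝ, HasDerivAt (fun u => stdCDF ((c - u)/r) - stdCDF ((-c - u)/r))
      (stdPdf ((c - u)/r) * (-1/r) - stdPdf ((-c - u)/r) * (-1/r)) u := by
    intro u
    have h1 : HasDerivAt (fun u : ℝ => (c - u)/r) (-1/r) u :=
      ((hasDerivAt_id u).const_sub c).div_const r
    have h2 : HasDerivAt (fun u : ℝ => (-c - u)/r) (-1/r) u :=
      ((hasDerivAt_id u).const_sub (-c)).div_const r
    exact ((stdCDF_hasDerivAt ((c - u)/r)).comp u h1).sub
      ((stdCDF_hasDerivAt ((-c - u)/r)).comp u h2)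
  have hdiff : Differentiable ℝ (fun u => stdCDF ((c - u)/r) - stdCDF ((-c - u)/r)) :=
    fun u => (hderiv u).differentiableAt
  refine antitoneOn_of_deriv_nonpos (convex_Ici 0) hdiff.continuous.continuousOn
    hdiff.differentiableOn ?_
  intro x hx
  rw [interior_Ici] at hx
  rw [(hderiv x).deriv]
  have hx0 : (0:ℝ) < x := hx
  have hpd : stdPdf ((-c - x)/r) ≤ stdPdf ((c - x)/r) := by
    apply stdPdf_anti
    have h2 : (0:ℝ) < r^2 := by positivity
    rw [div_pow, div_pow, div_le_div_iff₀ h2 h2]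
    nlinarith [mul_nonneg (mul_nonneg hc hx0.le) h2.le]
  have h1r : (0:ℝ) < 1/r := by positivity
  have hkey := mul_nonneg (sub_nonneg.2 hpd) h1r.le
  have : stdPdf ((c - x)/r) * (-1/r) - stdPdf ((-c - x)/r) * (-1/r)
      = -((stdPdf ((c - x)/r) - stdPdf ((-c - x)/r)) * (1/r)) := by ring
  rw [this]
  linarith

lemma gaussian_cosh_event_anti {T r b₀ b : ℝ} (hr : 0 < r) (hb₀ : 0 ≤ b₀) (hb : b₀ ≤ b) :
    gaussianReal 0 1 {x | Real.cosh (b + r*x) < T}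
      ≤ gaussianReal 0 1 {x | Real.cosh (b₀ + r*x) < T} := by
  by_cases hT : T ≤ 1
  · have : {x : ℝ | Real.cosh (b + r*x) < T} = ∅ := by
      ext x
      simp only [Set.mem_setOf_eq, Set.mem_empty_iff_false, iff_false, not_lt]
      exact hT.trans (Real.one_le_cosh _)
    rw [this]
    simp
  · push_neg at hT
    set c := Real.arsinh (Real.sqrt (T^2 - 1)) with hcdef
    have hT1 : (0:ℝ) ≤ T^2 - 1 := by nlinarith
    have hc : Real.cosh c = T := by
      rw [hcdef, Real.cosh_arsinh, Real.sq_sqrt hT1]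
      rw [show (1:ℝ) + (T^2 - 1) = T^2 by ring, Real.sqrt_sq (by linarith)]
    have hc0 : 0 ≤ c := by
      rw [hcdef, Real.arsinh_nonneg_iff]
      positivity
    have hset : ∀ β : ℝ, {x | Real.cosh (β + r*x) < T} = Set.Ioo ((-c - β)/r) ((c - β)/r) := by
      intro β
      ext x
      simp only [Set.mem_setOf_eq, Set.mem_Ioo, ← hc, Real.cosh_lt_cosh,
        abs_of_nonneg hc0, abs_lt, div_lt_iff₀ hr, lt_div_iff₀ hr]
      constructor <;> rintro ⟨h1, h2⟩ <;> constructor <;> nlinarith [mul_comm r x]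
    rw [hset b, hset b₀, ← ENNReal.toReal_le_toReal (measure_ne_top _ _) (measure_ne_top _ _),
      gaussian_Ioo_toReal (by apply div_le_div_of_nonneg_right ?_ hr.le; linarith;),
      gaussian_Ioo_toReal (by apply div_le_div_of_nonneg_right ?_ hr.le; linarith;)]
    exact stdCDF_diff_antitone c r hc0 hr hb₀ (hb₀.trans hb) hb

lemma cosh_set_measurable (b r T : ℝ) : MeasurableSet {x : ℝ | Real.cosh (b + r*x) < T} :=
  measurableSet_lt (Continuous.measurable (by fun_prop)) measurable_const

lemma gaussianReal_map_neg : (gaussianReal 0 1).map (fun x => -x) = gaussianReal 0 1 := by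
  have h := gaussianReal_map_const_mul (μ := 0) (v := 1) (-1)
  simp only [neg_one_mul, mul_zero] at h
  have hv : (⟨(-1:ℝ)^2, sq_nonneg _⟩ : NNReal) * 1 = 1 := by
    ext; norm_num
  convert h using 2
  exact hv.symm

lemma gaussian_cosh_event_symm (T r b : ℝ) :
    gaussianReal 0 1 {x | Real.cosh (b + r*x) < T}
      = gaussianReal 0 1 {x | Real.cosh (-b + r*x) < T} := by
  conv_lhs => rw [← _root_.gaussianReal_map_neg]
  rw [Measure.map_apply measurable_neg (cosh_set_measurable b r T)]
  congr 1
  ext x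
  simp only [Set.mem_preimage, Set.mem_setOf_eq]
  rw [show b + r * (-x) = -(-b + r*x) by ring, Real.cosh_neg]

lemma gaussian_cosh_event_le {T r b₀ b : ℝ} (hr : 0 < r) (hb₀ : 0 ≤ b₀) (hb : b₀ ≤ |b|) :
    gaussianReal 0 1 {x | Real.cosh (b + r*x) < T}
      ≤ gaussianReal 0 1 {x | Real.cosh (b₀ + r*x) < T} := by
  rcases le_or_gt 0 b with h | h
  · exact gaussian_cosh_event_anti hr hb₀ (by rwa [abs_of_nonneg h] at hb)
  · rw [gaussian_cosh_event_symm]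
    exact gaussian_cosh_event_anti hr hb₀ (by rwa [abs_of_neg h] at hb)

lemma pi_eval_measure {d : ℕ} (μ : Fin d → Measure ℝ) [∀ i, IsProbabilityMeasure (μ i)]
    (j : Fin d) {S : Set ℝ} (hS : MeasurableSet S) :
    Measure.pi μ (Function.eval j ⁻¹' S) = μ j S := by
  have hset : Function.eval j ⁻¹' S = Set.pi Set.univ (Function.update (fun _ : Fin d => (Set.univ : Set ℝ)) j S) := by
    ext x
    simp only [Set.mem_preimage, Set.mem_pi, Set.mem_univ, forall_true_left]
    constructor
    · intro h i
      by_cases hi : i = j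
      · subst hi; simpa using h
      · simp [Function.update_apply, hi]
    · intro h
      have := h j
      simpa using this
  rw [hset, Measure.pi_pi]
  rw [Finset.prod_eq_single j]
  · simp
  · intro i _ hi
    simp [Function.update_apply, hi]
  · simp

end AuxGaussian

/-- The law of the observation vector `X = θ + σξ` with i.i.d. standard Gaussian `ξ_j`. -/
noncomputable def Pmodel (d : ℕ) (σ : ℝ) (θ : Fin d → ℝ) : Measure (Fin d → ℝ) :=
  Measure.pi fun j => gaussianReal (θ j) (Real.toNNReal (σ ^ 2))

theorem cosh_selector_risk_bound (d s : ℕ) (hs : 1 ≤ s) (hsd : s < d)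
    (a σ : ℝ) (ha : 0 < a) (hσ : 0 < σ) (θ : Fin d → ℝ)
    (hcard : (Finset.univ.filter fun j => θ j ≠ 0).card = s)
    (hθ : ∀ j, θ j ≠ 0 → a ≤ |θ j|)
    (t : ℝ) (ht : t = a ^ 2 / (2 * σ ^ 2) + Real.log ((d : ℝ) / s - 1)) :
    (1 / (s : ℝ)) * ∫ x, (∑ j, |(if t ≤ Real.log (Real.cosh (a * x j / σ ^ 2))
          then (1 : ℝ) else 0) - (if θ j ≠ 0 then (1 : ℝ) else 0)|) ∂(Pmodel d σ θ)
      ≤ ((d : ℝ) / s - 1) *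
          (gaussianReal 0 1 {x : ℝ | (d : ℝ) / s - 1
            ≤ Real.exp (-a ^ 2 / (2 * σ ^ 2)) * Real.cosh (a * x / σ)}).toReal
        + (gaussianReal 0 1 {x : ℝ |
            Real.exp (-a ^ 2 / (2 * σ ^ 2)) * Real.cosh (a * x / σ + a ^ 2 / σ ^ 2)
              < (d : ℝ) / s - 1}).toReal := by
  classical
  have hs0 : (0:ℝ) < s := by exact_mod_cast hs
  have hsne : (s:ℝ) ≠ 0 := ne_of_gt hs0
  have hσ2 : (0:ℝ) < σ^2 := by positivity
  set τ : ℝ := (d:ℝ)/s - 1 with hτdef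
  have hτ : 0 < τ := by
    have : (1:ℝ) < (d:ℝ)/s := (one_lt_div hs0).2 (by exact_mod_cast hsd)
    simp only [hτdef]; linarith
  have hT : Real.exp t = Real.exp (a^2/(2*σ^2)) * τ := by
    rw [ht, Real.exp_add, Real.exp_log hτ]
  set ν : Measure ℝ := gaussianReal 0 1 with hνdef
  set v' : NNReal := Real.toNNReal (σ^2) with hv'def
  have hv' : v' ≠ 0 := by
    simp only [hv'def, ne_eq, Real.toNNReal_eq_zero, not_le]
    exact hσ2
  set S₀ : Set ℝ := {y : ℝ | t ≤ Real.log (Real.cosh (a * y / σ^2))} with hS₀def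
  have hS₀ : MeasurableSet S₀ :=
    measurableSet_le measurable_const
      (Real.measurable_log.comp (Continuous.measurable (by fun_prop)))
  set Sel : Fin d → Set ℝ := fun j => if θ j = 0 then S₀ else S₀ᶜ with hSeldef
  have hSel : ∀ j, MeasurableSet (Sel j) := by
    intro j
    simp only [hSeldef]
    split
    · exact hS₀
    · exact hS₀.compl
  -- rewrite the integrand as a sum of indicators
  have hfun : ∀ (x : Fin d → ℝ),
      (∑ j, |(if t ≤ Real.log (Real.cosh (a * x j / σ ^ 2))
          then (1 : ℝ) else 0) - (if θ j ≠ 0 then (1 : ℝ) else 0)|)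
        = ∑ j, (Function.eval j ⁻¹' Sel j).indicator (1 : (Fin d → ℝ) → ℝ) x := by
    intro x
    refine Finset.sum_congr rfl fun j _ => ?_
    by_cases hj : θ j = 0 <;>
      by_cases hc : t ≤ Real.log (Real.cosh (a * x j / σ ^ 2)) <;>
        simp [hj, hc, Set.indicator_apply, hSeldef, hS₀def, Function.eval]
  -- the exponent sets appearing on the right-hand side
  set E₁ : Set ℝ := {x : ℝ | τ ≤ Real.exp (-a ^ 2 / (2 * σ ^ 2)) * Real.cosh (a * x / σ)} with hE₁def
  set E₂ : Set ℝ := {x : ℝ |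
      Real.exp (-a ^ 2 / (2 * σ ^ 2)) * Real.cosh (a * x / σ + a ^ 2 / σ ^ 2) < τ} with hE₂def
  -- maps of gaussians
  have hmapσ : ν.map (fun x => σ * x) = gaussianReal 0 v' := by
    have h := gaussianReal_map_const_mul (μ := 0) (v := 1) σ
    simp only [mul_zero] at h
    have hv : (⟨σ^2, sq_nonneg σ⟩ : NNReal) * 1 = v' := by
      ext
      simp [hv'def, Real.coe_toNNReal _ (sq_nonneg σ)]
    convert h using 2
    exact hv.symm
  have hmapfull : ∀ j, ν.map (fun x => σ * x + θ j) = gaussianReal (θ j) v' := by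
    intro j
    have hcomp : (fun x : ℝ => σ * x + θ j) = (fun y => y + θ j) ∘ (fun x => σ * x) := rfl
    rw [hcomp, ← Measure.map_map (measurable_add_const (θ j)) (measurable_const_mul σ),
      hmapσ, gaussianReal_map_add_const (θ j), zero_add]
  -- each coordinate integral
  have hint : ∀ j, ∫ x, (Function.eval j ⁻¹' Sel j).indicator (1 : (Fin d → ℝ) → ℝ) x ∂(Pmodel d σ θ)
      = ((gaussianReal (θ j) v') (Sel j)).toReal := by
    intro j
    have hmeas : MeasurableSet ((Function.eval j : (Fin d → ℝ) → ℝ) ⁻¹' Sel j) :=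
      (hSel j).preimage
        (f := (Function.eval j : (Fin d → ℝ) → ℝ)) (measurable_pi_apply j)
    rw [integral_indicator_one hmeas]
    unfold Pmodel
    rw [measureReal_def, pi_eval_measure _ j (hSel j)]
  -- value on zero coordinates
  have hzero : ∀ j, θ j = 0 →
      ((gaussianReal (θ j) v') (Sel j)).toReal = (ν E₁).toReal := by
    intro j hj
    have hSelj : Sel j = S₀ := by simp [hSeldef, hj]
    have harg : ∀ x : ℝ, a * (σ * x) / σ^2 = a * x / σ := by
      intro x; field_simp
    have hpre : (fun x : ℝ => σ * x) ⁻¹' S₀ = E₁ := by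
      ext x
      simp only [Set.mem_preimage, hS₀def, Set.mem_setOf_eq, hE₁def, harg x]
      rw [Real.le_log_iff_exp_le (Real.cosh_pos _), hT,
        show -a^2/(2*σ^2) = -(a^2/(2*σ^2)) by ring, Real.exp_neg, inv_mul_eq_div,
        le_div_iff₀ (Real.exp_pos _), mul_comm]
    rw [hSelj, hj, ← hmapσ, Measure.map_apply (measurable_const_mul σ) hS₀, hpre]
  -- bound on nonzero coordinates
  have hone : ∀ j, θ j ≠ 0 →
      ((gaussianReal (θ j) v') (Sel j)).toReal ≤ (ν E₂).toReal := by
    intro j hj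
    have hSelj : Sel j = S₀ᶜ := by simp [hSeldef, hj]
    have harg : ∀ x : ℝ, a * (σ * x + θ j) / σ^2 = a * θ j / σ^2 + (a/σ) * x := by
      intro x; field_simp; ring
    have hpre : (fun x : ℝ => σ * x + θ j) ⁻¹' S₀ᶜ
        = {x : ℝ | Real.cosh (a * θ j / σ^2 + (a/σ) * x) < Real.exp t} := by
      ext x
      simp only [Set.mem_preimage, Set.mem_compl_iff, hS₀def, Set.mem_setOf_eq, not_le, harg x]
      rw [← Real.log_lt_iff_lt_exp (Real.cosh_pos _)]
    have hb : a^2/σ^2 ≤ |a * θ j / σ^2| := by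
      rw [abs_div, abs_mul, abs_of_pos ha, abs_of_pos hσ2]
      rw [pow_two, div_le_div_iff₀ hσ2 hσ2]
      have h5 : a * a ≤ a * |θ j| := mul_le_mul_of_nonneg_left (hθ j hj) ha.le
      nlinarith [mul_le_mul_of_nonneg_right h5 hσ2.le]
    have hle : ν ((fun x : ℝ => σ * x + θ j) ⁻¹' S₀ᶜ) ≤ ν E₂ := by
      rw [hpre]
      have hkey := gaussian_cosh_event_le (T := Real.exp t) (r := a/σ)
        (b₀ := a^2/σ^2) (b := a * θ j / σ^2) (by positivity) (by positivity) hb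
      refine le_trans hkey (le_of_eq ?_)
      have hsets : {x : ℝ | Real.cosh (a^2/σ^2 + a/σ * x) < Real.exp t} = E₂ := by
        ext x
        simp only [Set.mem_setOf_eq, hE₂def]
        rw [show a^2/σ^2 + a/σ * x = a * x / σ + a^2/σ^2 by ring, hT,
          show -a^2/(2*σ^2) = -(a^2/(2*σ^2)) by ring, Real.exp_neg, inv_mul_eq_div,
          div_lt_iff₀ (Real.exp_pos _), mul_comm τ (Real.exp _)]
      rw [hsets]
    rw [hSelj, ← hmapfull j,
      Measure.map_apply ((measurable_const_mul σ).add_const (θ j)) hS₀.compl]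
    exact ENNReal.toReal_mono (measure_ne_top _ _) hle
  -- integrability of each summand
  have hinteg : ∀ j : Fin d, Integrable
      (fun x : Fin d → ℝ => (Function.eval j ⁻¹' Sel j).indicator (1 : (Fin d → ℝ) → ℝ) x)
      (Pmodel d σ θ) := by
    intro j
    have : IsProbabilityMeasure (Pmodel d σ θ) := by
      unfold Pmodel; infer_instance
    have hmeas : MeasurableSet ((Function.eval j : (Fin d → ℝ) → ℝ) ⁻¹' Sel j) :=
      (hSel j).preimage
        (f := (Function.eval j : (Fin d → ℝ) → ℝ)) (measurable_pi_apply j)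
    exact (integrable_const (1:ℝ)).indicator hmeas
  -- put everything together
  have hsum : ∫ x, (∑ j, |(if t ≤ Real.log (Real.cosh (a * x j / σ ^ 2))
          then (1 : ℝ) else 0) - (if θ j ≠ 0 then (1 : ℝ) else 0)|) ∂(Pmodel d σ θ)
      = ∑ j, ((gaussianReal (θ j) v') (Sel j)).toReal := by
    rw [show (fun x : Fin d → ℝ => ∑ j, |(if t ≤ Real.log (Real.cosh (a * x j / σ ^ 2))
          then (1 : ℝ) else 0) - (if θ j ≠ 0 then (1 : ℝ) else 0)|)
        = fun x => ∑ j, (Function.eval j ⁻¹' Sel j).indicator (1 : (Fin d → ℝ) → ℝ) x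
      from funext hfun]
    rw [integral_finset_sum _ (fun j _ => hinteg j)]
    exact Finset.sum_congr rfl fun j _ => hint j
  rw [hsum]
  -- split the sum
  have hcard0 : (Finset.univ.filter fun j : Fin d => ¬ θ j ≠ 0).card = d - s := by
    have h := Finset.card_filter_add_card_filter_not
      (s := (Finset.univ : Finset (Fin d))) (p := fun j => θ j ≠ 0)
    simp only [Finset.card_univ, Fintype.card_fin] at h
    omega
  have hsplit : ∑ j, ((gaussianReal (θ j) v') (Sel j)).toReal
      ≤ ((d:ℝ) - s) * (ν E₁).toReal + (s:ℝ) * (ν E₂).toReal := by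
    rw [← Finset.sum_filter_add_sum_filter_not Finset.univ (fun j => θ j ≠ 0)]
    have h1 : ∑ j ∈ Finset.univ.filter (fun j => θ j ≠ 0),
        ((gaussianReal (θ j) v') (Sel j)).toReal ≤ (s:ℝ) * (ν E₂).toReal := by
      have := Finset.sum_le_card_nsmul (Finset.univ.filter (fun j : Fin d => θ j ≠ 0))
        (fun j => ((gaussianReal (θ j) v') (Sel j)).toReal) ((ν E₂).toReal)
        (fun j hjmem => hone j (Finset.mem_filter.1 hjmem).2)
      rwa [hcard, nsmul_eq_mul] at this
    have h2 : ∑ j ∈ Finset.univ.filter (fun j => ¬ θ j ≠ 0),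
        ((gaussianReal (θ j) v') (Sel j)).toReal = ((d:ℝ) - s) * (ν E₁).toReal := by
      rw [Finset.sum_congr rfl (fun j hjmem => hzero j
        (not_not.1 (Finset.mem_filter.1 hjmem).2))]
      rw [Finset.sum_const, hcard0, nsmul_eq_mul]
      congr 1
      rw [Nat.cast_sub hsd.le]
    linarith
  have hgoal : (1/(s:ℝ)) * (((d:ℝ) - s) * (ν E₁).toReal + (s:ℝ) * (ν E₂).toReal)
      = τ * (ν E₁).toReal + (ν E₂).toReal := by
    simp only [hτdef]
    field_simp
  calc (1/(s:ℝ)) * ∑ j, ((gaussianReal (θ j) v') (Sel j)).toReal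
      ≤ (1/(s:ℝ)) * (((d:ℝ) - s) * (ν E₁).toReal + (s:ℝ) * (ν E₂).toReal) := by
        apply mul_le_mul_of_nonneg_left hsplit (by positivity)
    _ = τ * (ν E₁).toReal + (ν E₂).toReal := hgoal
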